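/- If the Collatz conjecture holds in the form 'every positive integer is E_{3,2}-equivalent to 1', then both quotient groups H_{3,2} and H_{3,8} are trivial. -/

import Mathlib

abbrev G : Type := {x : ℚ // 0 < x}

def toG (c : ℕ+) : G := ⟨(c : ℚ), by exact_mod_cast c.pos⟩

def Cmap (p q : ℕ+) (c : ℕ+) : ℕ+ :=
  if h : (q : ℕ) ∣ (c : ℕ) then
    ⟨(c : ℕ) / (q : ℕ), Nat.div_pos (Nat.le_of_dvd c.pos h) q.pos⟩
  else p * c + 1

def E (p q : ℕ+) : ℕ+ → ℕ+ → Prop := Relation.EqvGen (fun c d => d = Cmap p q c)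

def Npq (p q : ℕ+) : Subgroup G :=
  Subgroup.closure ({toG q} ∪ {x : G | ∃ c d : ℕ+, E p q c d ∧ x = toG c / toG d})

lemma toG_one : toG 1 = 1 := by
  apply Subtype.ext
  simp [toG]

lemma toG_mul (a b : ℕ+) : toG (a * b) = toG a * toG b := by
  apply Subtype.ext
  show ((((a * b : ℕ+) : ℕ) : ℚ)) = ((a : ℕ) : ℚ) * ((b : ℕ) : ℚ)
  push_cast
  ring

lemma toG_mem (p q : ℕ+) (c : ℕ+) (hc : E p q c 1) : toG c ∈ Npq p q := by
  have h1 : toG c / toG 1 ∈ Npq p q :=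
    Subgroup.subset_closure (Or.inr ⟨c, 1, hc, rfl⟩)
  rw [toG_one, div_one] at h1
  exact h1

lemma repG (x : G) : ∃ a b : ℕ+, x = toG a / toG b := by
  have hnum : 0 < x.val.num := Rat.num_pos.mpr x.2
  refine ⟨⟨x.val.num.toNat, by omega⟩, ⟨x.val.den, x.val.pos⟩, ?_⟩
  apply Subtype.ext
  show x.val = ((x.val.num.toNat : ℕ) : ℚ) / ((x.val.den : ℕ) : ℚ)
  have e : ((x.val.num.toNat : ℕ) : ℚ) = (x.val.num : ℚ) := by
    exact_mod_cast Int.toNat_of_nonneg hnum.le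
  rw [e]
  exact (Rat.num_div_den x.val).symm

lemma N32_top (h : ∀ c : ℕ+, E 3 2 c 1) : Npq 3 2 = ⊤ := by
  rw [eq_top_iff]
  intro x _
  obtain ⟨a, b, rfl⟩ := repG x
  exact div_mem (toG_mem 3 2 a (h a)) (toG_mem 3 2 b (h b))

lemma toG4_mem : toG 4 ∈ Npq 3 8 := by
  have hE : E 3 8 1 4 := Relation.EqvGen.rel _ _ (by rfl)
  have h1 : toG 1 / toG 4 ∈ Npq 3 8 :=
    Subgroup.subset_closure (Or.inr ⟨1, 4, hE, rfl⟩)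
  have h2 := inv_mem h1
  rw [toG_one, one_div, inv_inv] at h2
  exact h2

lemma toG2_mem : toG 2 ∈ Npq 3 8 := by
  have h8 : toG 8 ∈ Npq 3 8 := Subgroup.subset_closure (Or.inl rfl)
  have h84 : toG 8 / toG 4 ∈ Npq 3 8 := div_mem h8 toG4_mem
  have : toG 8 / toG 4 = toG 2 := by
    have : (8 : ℕ+) = 2 * 4 := rfl
    rw [this, toG_mul, mul_div_assoc, div_self', mul_one]
  rwa [this] at h84

lemma N32_le_N38 : Npq 3 2 ≤ Npq 3 8 := by
  rw [Npq]
  apply Subgroup.closure_le (Npq 3 8) |>.mpr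
  rintro x (rfl | ⟨c, d, hE, rfl⟩)
  · exact toG2_mem
  · induction hE with
    | rel c d hcd =>
      by_cases h2 : (2 : ℕ) ∣ (c : ℕ)
      · have hd : d = ⟨(c : ℕ) / 2, Nat.div_pos (Nat.le_of_dvd c.pos h2) (by norm_num)⟩ := by
          rw [hcd, Cmap]; simp [h2]; rfl
        have hc2 : c = 2 * d := by
          apply PNat.coe_injective
          rw [hd]
          show (c : ℕ) = 2 * ((c : ℕ) / 2)
          omega
        have : toG c / toG d = toG 2 := by
          rw [hc2, toG_mul, mul_div_assoc, div_self', mul_one]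
        rw [this]
        exact toG2_mem
      · have h8 : ¬ ((8 : ℕ) ∣ (c : ℕ)) := fun hdvd => h2 (dvd_trans (by norm_num) hdvd)
        have hd : d = Cmap 3 8 c := by
          rw [hcd, Cmap, Cmap]
          simp [h2, h8]
        exact Subgroup.subset_closure (Or.inr ⟨c, d, Relation.EqvGen.rel _ _ hd, rfl⟩)
    | refl c => rw [div_self']; exact one_mem _
    | symm c d _ ih =>
      have := inv_mem ih
      rwa [inv_div] at this
    | trans a b c _ _ ih1 ih2 =>
      have := mul_mem ih1 ih2
      have e : toG a / toG b * (toG b / toG c) = toG a / toG c := div_mul_div_cancel _ _ _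
      rwa [e] at this

theorem stmt17 (h : ∀ c : ℕ+, E 3 2 c 1) :
    Subsingleton (G ⧸ Npq 3 2) ∧ Subsingleton (G ⧸ Npq 3 8) := by
  have h32 := N32_top h
  have h38 : Npq 3 8 = ⊤ := eq_top_iff.mpr (h32 ▸ N32_le_N38)
  constructor
  · rw [h32]; exact QuotientGroup.subsingleton_quotient_top
  · rw [h38]; exact QuotientGroup.subsingleton_quotient_top
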